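/- arXiv:math/0407375 — 3 statements merged into one kernel-verified Lean document; each statement's English description precedes it below -/
import Mathlib

section
/- Let G be a chordal graph on the vertex set [n], and let F_1,...,F_m be the facets of the clique complex Δ(G) which admit a free vertex. If [n] is the disjoint union of F_1,...,F_m, then G is unmixed; more precisely, a subset X ⊆ [n] is a minimal vertex cover of G only if |X ∩ F_i| = |F_i| − 1 for all i, so every minimal vertex cover has cardinality n − m. -/
set_option maxHeartbeats 1000000
set_option synthInstance.maxHeartbeats 400000

open MvPolynomial

/-- A simple graph is chordal if every cycle of length > 3 has a chord, i.e. an edge of the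
graph joining two vertices of the cycle which is not an edge of the cycle. -/
def SimpleGraph.IsChordal {V : Type*} (G : SimpleGraph V) : Prop :=
  ∀ (v : V) (c : G.Walk v v), c.IsCycle → 3 < c.length →
    ∃ u w, u ∈ c.support ∧ w ∈ c.support ∧ G.Adj u w ∧ s(u, w) ∉ c.edges

/-- `F` is a facet of the clique complex `Δ(G)`, i.e. a maximal clique of `G`. -/
def SimpleGraph.IsFacet {V : Type*} (G : SimpleGraph V) (F : Finset V) : Prop :=
  G.IsClique (F : Set V) ∧ ∀ F' : Finset V, G.IsClique (F' : Set V) → F ⊆ F' → F' = F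

/-- `v` is a free vertex of the facet `F` of `Δ(G)`: it belongs to no other facet. -/
def SimpleGraph.IsFreeVertex {V : Type*} (G : SimpleGraph V) (F : Finset V) (v : V) : Prop :=
  v ∈ F ∧ ∀ F' : Finset V, G.IsFacet F' → v ∈ F' → F' = F

/-- `F` is a facet of `Δ(G)` admitting a free vertex. -/
def SimpleGraph.IsFreeFacet {V : Type*} (G : SimpleGraph V) (F : Finset V) : Prop :=
  G.IsFacet F ∧ ∃ v, G.IsFreeVertex F v

/-- A vertex cover of `G`: a set of vertices meeting every edge. -/
def SimpleGraph.IsFinsetVertexCover {V : Type*} (G : SimpleGraph V) (C : Finset V) : Prop :=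
  ∀ u w, G.Adj u w → u ∈ C ∨ w ∈ C

/-- A minimal vertex cover of `G`: no proper subset is a vertex cover. -/
def SimpleGraph.IsMinVertexCover {V : Type*} (G : SimpleGraph V) (C : Finset V) : Prop :=
  G.IsFinsetVertexCover C ∧ ∀ C' ⊆ C, G.IsFinsetVertexCover C' → C' = C

/-- `G` is unmixed: all minimal vertex covers of `G` have the same cardinality. -/
def SimpleGraph.Unmixed {V : Type*} (G : SimpleGraph V) : Prop :=
  ∀ C C' : Finset V, G.IsMinVertexCover C → G.IsMinVertexCover C' → C.card = C'.card


lemma exists_facet_supset {n : ℕ} (G : SimpleGraph (Fin n)) (s : Finset (Fin n))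
    (hs : G.IsClique (s : Set (Fin n))) : ∃ Fa, G.IsFacet Fa ∧ s ⊆ Fa := by
  classical
  obtain ⟨t, ht, hmax⟩ := Finset.exists_max_image
    ((Finset.univ : Finset (Finset (Fin n))).filter
      fun t : Finset (Fin n) => G.IsClique (t : Set (Fin n)) ∧ s ⊆ t)
    (fun t => t.card) ⟨s, by simp [hs]⟩
  simp only [Finset.mem_filter, Finset.mem_univ, true_and] at ht hmax
  refine ⟨t, ⟨ht.1, fun F' hF' hsub => ?_⟩, ht.2⟩
  exact (Finset.eq_of_subset_of_card_le hsub
    (hmax F' (by exact ⟨hF', ht.2.trans hsub⟩))).symm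

/-- If `G` is a chordal graph on `[n]` and `[n]` is the disjoint union of
the facets `F_1,…,F_m` of `Δ(G)` admitting a free vertex, then every minimal vertex cover
`X` of `G` satisfies `|X ∩ F_i| = |F_i| - 1` for all `i`, hence has cardinality `n - m`;
in particular `G` is unmixed. -/
theorem partition_implies_unmixed {n : ℕ} (G : SimpleGraph (Fin n))
    (hchordal : G.IsChordal) (hiso : ∀ v : Fin n, ∃ w, G.Adj v w)
    {m : ℕ} (F : Fin m → Finset (Fin n))
    (hFfree : ∀ i, G.IsFreeFacet (F i)) (hFinj : Function.Injective F)
    (hFall : ∀ F' : Finset (Fin n), G.IsFreeFacet F' → ∃ i, F' = F i)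
    (hdisj : ∀ i j, i ≠ j → Disjoint (F i) (F j))
    (hcover : ∀ v : Fin n, ∃ i, v ∈ F i) :
    (∀ X : Finset (Fin n), G.IsMinVertexCover X →
      (∀ i, (X ∩ F i).card = (F i).card - 1) ∧ X.card = n - m) ∧
    G.Unmixed := by
  classical
  have key : ∀ X : Finset (Fin n), G.IsMinVertexCover X →
      (∀ i, (X ∩ F i).card = (F i).card - 1) ∧ X.card = n - m := by
    intro X hX
    have hpart : ∀ i, (X ∩ F i).card = (F i).card - 1 := by
      intro i
      obtain ⟨hfacet, v, hvF, hvfree⟩ := hFfree i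
      -- X does not contain all of F i
      have hnsub : ¬ (F i ⊆ X) := by
        intro hsub
        have hcov' : G.IsFinsetVertexCover (X.erase v) := by
          intro u w huw
          have hmem : ∀ a b : Fin n, G.Adj a b → a = v → b ∈ F i := by
            rintro a b hab rfl
            obtain ⟨F', hF', hsub'⟩ := exists_facet_supset G {a, b} (by
              intro x hx y hy hxy
              simp only [Finset.coe_insert, Finset.coe_singleton, Set.mem_insert_iff,
                Set.mem_singleton_iff] at hx hy
              rcases hx with rfl | rfl <;> rcases hy with rfl | rfl
              · exact absurd rfl hxy
              · exact hab
              · exact hab.symm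
              · exact absurd rfl hxy)
            have hEq : F' = F i := hvfree F' hF' (hsub' (by simp))
            exact hEq ▸ hsub' (by simp)
          rcases eq_or_ne u v with rfl | hu
          · exact Or.inr (Finset.mem_erase.mpr ⟨huw.ne', hsub (hmem u w huw rfl)⟩)
          · rcases eq_or_ne w v with rfl | hw
            · exact Or.inl (Finset.mem_erase.mpr ⟨huw.ne, hsub (hmem w u huw.symm rfl)⟩)
            · rcases hX.1 u w huw with h | h
              · exact Or.inl (Finset.mem_erase.mpr ⟨hu, h⟩)
              · exact Or.inr (Finset.mem_erase.mpr ⟨hw, h⟩)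
        have heq := hX.2 (X.erase v) (Finset.erase_subset _ _) hcov'
        have hvX : v ∈ X := hsub hvF
        rw [← heq] at hvX
        exact absurd hvX (Finset.notMem_erase v X)
      -- F i \ X has at most one element
      have hle : (F i \ X).card ≤ 1 := by
        by_contra h
        push_neg at h
        obtain ⟨a, ha, b, hb, hab⟩ := Finset.one_lt_card.mp h
        rw [Finset.mem_sdiff] at ha hb
        have hadj : G.Adj a b := hfacet.1 ha.1 hb.1 hab
        rcases hX.1 a b hadj with h' | h'
        · exact ha.2 h'
        · exact hb.2 h'
      have hne : (F i \ X).Nonempty := by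
        rw [Finset.sdiff_nonempty]
        exact hnsub
      have hcard1 : (F i \ X).card = 1 := le_antisymm hle (Finset.card_pos.mpr hne)
      have := Finset.card_inter_add_card_sdiff (F i) X
      rw [Finset.inter_comm] at this
      omega
    refine ⟨hpart, ?_⟩
    have hXbi : X = Finset.univ.biUnion (fun i => X ∩ F i) := by
      ext x
      simp only [Finset.mem_biUnion, Finset.mem_univ, true_and, Finset.mem_inter]
      constructor
      · intro hx
        obtain ⟨i, hi⟩ := hcover x
        exact ⟨i, hx, hi⟩
      · rintro ⟨i, hx, _⟩
        exact hx
    have hUbi : (Finset.univ : Finset (Fin n)) = Finset.univ.biUnion F := by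
      ext x
      simpa using hcover x
    have hXcard : X.card = ∑ i, (X ∩ F i).card := by
      conv_lhs => rw [hXbi]
      exact Finset.card_biUnion (fun i _ j _ hij =>
        (hdisj i j hij).mono Finset.inter_subset_right Finset.inter_subset_right)
    have hncard : n = ∑ i, (F i).card := by
      have := Finset.card_biUnion (s := (Finset.univ : Finset (Fin m))) (t := F)
        (fun i _ j _ hij => hdisj i j hij)
      rw [← hUbi, Finset.card_univ, Fintype.card_fin] at this
      exact this
    have hpos : ∀ i, 1 ≤ (F i).card := by
      intro i
      obtain ⟨_, v, hvF, _⟩ := hFfree i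
      exact Finset.card_pos.mpr ⟨v, hvF⟩
    have hsum : (∑ i, ((F i).card - 1)) + m = ∑ i, (F i).card := by
      have : ∑ i, ((F i).card - 1 + 1) = ∑ i, (F i).card :=
        Finset.sum_congr rfl (fun i _ => Nat.sub_add_cancel (hpos i))
      rw [Finset.sum_add_distrib] at this
      simpa using this
    have : X.card = ∑ i, ((F i).card - 1) := by
      rw [hXcard]
      exact Finset.sum_congr rfl (fun i _ => hpart i)
    omega
  refine ⟨key, fun C C' hC hC' => ?_⟩
  rw [(key C hC).2, (key C' hC').2]
end

section
/- Let G be an unmixed chordal graph on the vertex set [n] and let F_1,...,F_m be the facets of the clique complex Δ(G) which admit a free vertex. Then F_i ∩ F_j = ∅ whenever i ≠ j. -/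
set_option maxHeartbeats 1000000
set_option synthInstance.maxHeartbeats 400000

open MvPolynomial

lemma exists_facet_superset {n : ℕ} (G : SimpleGraph (Fin n)) {S : Finset (Fin n)}
    (hS : G.IsClique (S : Set (Fin n))) : ∃ F, G.IsFacet F ∧ S ⊆ F := by
  classical
  obtain ⟨T, hT, hmax⟩ := Finset.exists_max_image
    (Finset.univ.filter fun T => S ⊆ T ∧ G.IsClique (T : Set (Fin n))) Finset.card
    ⟨S, by simp [hS]⟩
  simp only [Finset.mem_filter] at hT
  refine ⟨T, ⟨hT.2.2, fun F' hc hsub => ?_⟩, hT.2.1⟩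
  have := hmax F' (by simp [hT.2.1.trans hsub, hc])
  exact (Finset.eq_of_subset_of_card_le hsub this).symm

lemma exists_min_cover_subset {n : ℕ} (G : SimpleGraph (Fin n)) {C : Finset (Fin n)}
    (hC : G.IsFinsetVertexCover C) : ∃ D ⊆ C, G.IsMinVertexCover D := by
  classical
  obtain ⟨D, hD, hmin⟩ := Finset.exists_min_image
    (Finset.univ.filter fun D => D ⊆ C ∧ G.IsFinsetVertexCover D) Finset.card
    ⟨C, by simp [hC]⟩
  simp only [Finset.mem_filter] at hD
  refine ⟨D, hD.2.1, hD.2.2, fun C' hsub hcov => ?_⟩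
  have := hmin C' (by simp [hsub.trans hD.2.1, hcov])
  exact Finset.eq_of_subset_of_card_le hsub this

lemma free_vertex_nbr {n : ℕ} (G : SimpleGraph (Fin n)) {F : Finset (Fin n)} {z w : Fin n}
    (hz : G.IsFreeVertex F z) (h : G.Adj z w) : w ∈ F := by
  have hcl : G.IsClique (({z, w} : Finset (Fin n)) : Set (Fin n)) := by
    rw [Finset.coe_pair]
    exact SimpleGraph.isClique_pair.mpr (fun _ => h)
  obtain ⟨T, hT, hsub⟩ := exists_facet_superset G hcl
  have : T = F := hz.2 T hT (hsub (by simp))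
  exact this ▸ hsub (by simp)

/-- If `G` is an unmixed chordal graph on `[n]`, then the facets of
`Δ(G)` admitting a free vertex are pairwise disjoint. -/
theorem freeFacets_pairwise_disjoint {n : ℕ} (G : SimpleGraph (Fin n))
    (hchordal : G.IsChordal) (hiso : ∀ v : Fin n, ∃ w, G.Adj v w)
    (hunmixed : G.Unmixed)
    (F F' : Finset (Fin n)) (hF : G.IsFreeFacet F) (hF' : G.IsFreeFacet F')
    (hne : F ≠ F') :
    Disjoint F F' := by
  classical
  rw [Finset.disjoint_left]
  by_contra hcon
  push_neg at hcon
  obtain ⟨v, hvF, hvF'⟩ := hcon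
  obtain ⟨hFfac, z, hz⟩ := hF
  obtain ⟨hF'fac, z', hz'⟩ := hF'
  have hzF' : z ∉ F' := fun h => hne (hz.2 F' hF'fac h).symm
  have hz'F : z' ∉ F := fun h => hne (hz'.2 F hFfac h)
  have hzz' : z ≠ z' := fun h => hz'F (h ▸ hz.1)
  -- C2 : minimal vertex cover avoiding v
  have hcov : G.IsFinsetVertexCover (Finset.univ \ {v}) := by
    intro u w huw
    rcases eq_or_ne u v with rfl | hu
    · exact Or.inr (by simp [huw.ne'])
    · exact Or.inl (by simp [hu])
  obtain ⟨C2, hC2sub, hC2⟩ := exists_min_cover_subset G hcov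
  have hvC2 : v ∉ C2 := fun h => by simpa using hC2sub h
  -- C2 contains all of (F ∪ F') \ {v}
  have hFF'C2 : (F ∪ F') \ {v} ⊆ C2 := by
    intro u hu
    simp only [Finset.mem_sdiff, Finset.mem_union, Finset.mem_singleton] at hu
    obtain ⟨hu1, hu2⟩ := hu
    rcases hu1 with h1 | h1
    · rcases hC2.1 u v (hFfac.1 h1 hvF hu2) with h | h
      · exact h
      · exact absurd h hvC2
    · rcases hC2.1 u v (hF'fac.1 h1 hvF' hu2) with h | h
      · exact h
      · exact absurd h hvC2
  -- C1' : a vertex cover avoiding z and z'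
  set C1 : Finset (Fin n) := (C2 \ (F ∪ F')) ∪ ((F ∪ F') \ {z, z'}) with hC1def
  have hC1cov : G.IsFinsetVertexCover C1 := by
    intro u w huw
    by_cases hu : u ∈ F ∪ F'
    · by_cases huz : u = z ∨ u = z'
      · rcases huz with rfl | rfl
        · -- w is a neighbor of z, hence w ∈ F, w ≠ z, w ≠ z'
          refine Or.inr (Finset.mem_union_right _ ?_)
          have hwF : w ∈ F := free_vertex_nbr G hz huw
          simp only [Finset.mem_sdiff, Finset.mem_union, Finset.mem_insert,
            Finset.mem_singleton]
          exact ⟨Or.inl hwF, by rintro (rfl | rfl); exacts [huw.ne rfl, hz'F hwF]⟩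
        · refine Or.inr (Finset.mem_union_right _ ?_)
          have hwF : w ∈ F' := free_vertex_nbr G hz' huw
          simp only [Finset.mem_sdiff, Finset.mem_union, Finset.mem_insert,
            Finset.mem_singleton]
          exact ⟨Or.inr hwF, by rintro (rfl | rfl); exacts [hzF' hwF, huw.ne rfl]⟩
      · push_neg at huz
        refine Or.inl (Finset.mem_union_right _ ?_)
        simp only [Finset.mem_sdiff, Finset.mem_insert, Finset.mem_singleton]
        exact ⟨hu, by rintro (rfl | rfl); exacts [huz.1 rfl, huz.2 rfl]⟩
    · by_cases hw : w ∈ F ∪ F'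
      · by_cases hwz : w = z ∨ w = z'
        · rcases hwz with rfl | rfl
          · refine Or.inl (Finset.mem_union_right _ ?_)
            have huF : u ∈ F := free_vertex_nbr G hz huw.symm
            exact absurd (Finset.mem_union_left _ huF) hu
          · refine Or.inl (Finset.mem_union_right _ ?_)
            have huF : u ∈ F' := free_vertex_nbr G hz' huw.symm
            exact absurd (Finset.mem_union_right _ huF) hu
        · push_neg at hwz
          refine Or.inr (Finset.mem_union_right _ ?_)
          simp only [Finset.mem_sdiff, Finset.mem_insert, Finset.mem_singleton]
          exact ⟨hw, by rintro (rfl | rfl); exacts [hwz.1 rfl, hwz.2 rfl]⟩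
      · rcases hC2.1 u w huw with h | h
        · exact Or.inl (Finset.mem_union_left _ (Finset.mem_sdiff.mpr ⟨h, hu⟩))
        · exact Or.inr (Finset.mem_union_left _ (Finset.mem_sdiff.mpr ⟨h, hw⟩))
  obtain ⟨D, hDsub, hD⟩ := exists_min_cover_subset G hC1cov
  have heq : D.card = C2.card := hunmixed D C2 hD hC2
  -- cardinality estimates
  have hvFF' : ({v} : Finset (Fin n)) ⊆ F ∪ F' := by
    simp [Finset.singleton_subset_iff, hvF]
  have hzzFF' : ({z, z'} : Finset (Fin n)) ⊆ F ∪ F' := by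
    intro x hx
    simp only [Finset.mem_insert, Finset.mem_singleton] at hx
    rcases hx with rfl | rfl
    · exact Finset.mem_union_left _ hz.1
    · exact Finset.mem_union_right _ hz'.1
  have hcard2 : ({z, z'} : Finset (Fin n)).card = 2 := Finset.card_pair hzz'
  have hk : 2 ≤ (F ∪ F').card := hcard2 ▸ Finset.card_le_card hzzFF'
  have hub : D.card ≤ (C2 \ (F ∪ F')).card + ((F ∪ F').card - 2) := by
    calc D.card ≤ C1.card := Finset.card_le_card hDsub
    _ ≤ (C2 \ (F ∪ F')).card + ((F ∪ F') \ ({z, z'} : Finset (Fin n))).card :=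
        Finset.card_union_le _ _
    _ = (C2 \ (F ∪ F')).card + ((F ∪ F').card - 2) := by
        rw [Finset.card_sdiff_of_subset hzzFF', hcard2]
  have hlb : (C2 \ (F ∪ F')).card + ((F ∪ F').card - 1) ≤ C2.card := by
    have h1 : (C2 \ (F ∪ F')).card + (C2 ∩ (F ∪ F')).card = C2.card := by
      rw [Finset.card_sdiff_add_card_inter]
    have h2 : (F ∪ F').card - 1 ≤ (C2 ∩ (F ∪ F')).card := by
      have : (F ∪ F') \ {v} ⊆ C2 ∩ (F ∪ F') :=
        Finset.subset_inter hFF'C2 Finset.sdiff_subset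
      have := Finset.card_le_card this
      rwa [Finset.card_sdiff_of_subset hvFF', Finset.card_singleton] at this
    omega
  omega
end

section
/- Let K be a field and G a chordal graph on the vertex set [n] such that [n] is the disjoint union of the facets F_1,...,F_m of Δ(G) admitting a free vertex. For i = 1,...,m set y_i = Σ_{j ∈ F_i} x_j in S = K[x_1,...,x_n]. Then y_1,...,y_m is a regular sequence on S/I(G). -/
set_option maxHeartbeats 1000000
set_option synthInstance.maxHeartbeats 400000

open MvPolynomial

/-- The edge ideal `I(G) ⊆ K[x_1,…,x_n]` of a graph `G` on `[n]`, generated by the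
monomials `x_i x_j` with `{i,j}` an edge of `G`. -/
noncomputable def edgeIdeal (K : Type*) [CommRing K] {n : ℕ} (G : SimpleGraph (Fin n)) :
    Ideal (MvPolynomial (Fin n) K) :=
  Ideal.span {p | ∃ i j : Fin n, G.Adj i j ∧ p = X i * X j}

lemma ideal_smul_top (R : Type*) [CommRing R] (J : Ideal R) :
    J • (⊤ : Submodule R R) = J := by
  apply le_antisymm
  · exact Submodule.smul_le.mpr fun r hr m _ => by
      simpa [smul_eq_mul] using J.mul_mem_right m hr
  · intro x hx
    simpa using Submodule.smul_mem_smul hx (Submodule.mem_top (x := (1 : R)))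

lemma gen_regular {R : Type*} [CommRing R] (I : Ideal R) (l : List R)
    (h : ∀ (k : ℕ) (hk : k < l.length) (f : R),
      f * l[k] ∈ I ⊔ Ideal.ofList (l.take k) → f ∈ I ⊔ Ideal.ofList (l.take k))
    (hne : I ⊔ Ideal.ofList l ≠ ⊤) :
    RingTheory.Sequence.IsRegular (R ⧸ I) (l.map (Ideal.Quotient.mk I)) := by
  constructor
  · rw [RingTheory.Sequence.isWeaklyRegular_iff]
    intro k hk
    rw [List.length_map] at hk
    have hget : (l.map (Ideal.Quotient.mk I))[k] = Ideal.Quotient.mk I l[k] := by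
      simp
    have htake : (l.map (Ideal.Quotient.mk I)).take k = (l.take k).map (Ideal.Quotient.mk I) := by
      rw [List.map_take]
    rw [hget, htake]
    have hofl : Ideal.ofList ((l.take k).map (Ideal.Quotient.mk I))
        = Ideal.map (Ideal.Quotient.mk I) (Ideal.ofList (l.take k)) := by
      rw [Ideal.map_ofList]
    rw [hofl, ideal_smul_top]
    intro a b hab
    obtain ⟨a, rfl⟩ := Submodule.Quotient.mk_surjective _ a
    obtain ⟨b, rfl⟩ := Submodule.Quotient.mk_surjective _ b
    obtain ⟨x, rfl⟩ := Ideal.Quotient.mk_surjective a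
    obtain ⟨y, rfl⟩ := Ideal.Quotient.mk_surjective b
    have hsmul : ∀ z : R, (Ideal.Quotient.mk I l[k]) • (Submodule.Quotient.mk
        (p := (Ideal.map (Ideal.Quotient.mk I) (Ideal.ofList (l.take k)) :
          Submodule (R ⧸ I) (R ⧸ I))) (Ideal.Quotient.mk I z))
        = Submodule.Quotient.mk (Ideal.Quotient.mk I (l[k] * z)) := by
      intro z
      have hz : (Ideal.Quotient.mk I l[k]) * (Ideal.Quotient.mk I z)
          = Ideal.Quotient.mk I (l[k] * z) := by rw [← map_mul]
      rw [← Submodule.Quotient.mk_smul, smul_eq_mul, hz]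
    dsimp only at hab
    rw [hsmul, hsmul] at hab
    rw [Submodule.Quotient.eq] at hab ⊢
    have : (Ideal.Quotient.mk I) (l[k] * x) - (Ideal.Quotient.mk I) (l[k] * y)
        = Ideal.Quotient.mk I (l[k] * x - l[k] * y) := by rw [map_sub]
    rw [this, Ideal.mem_quotient_iff_mem_sup, sup_comm] at hab
    have h2 : (x - y) * l[k] ∈ I ⊔ Ideal.ofList (l.take k) := by
      have : (x - y) * l[k] = l[k] * x - l[k] * y := by ring
      rwa [this]
    have h3 := h k hk (x - y) h2
    rw [← map_sub, Ideal.mem_quotient_iff_mem_sup, sup_comm]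
    exact h3
  · intro htop
    apply hne
    rw [← Ideal.map_ofList, ideal_smul_top] at htop
    rw [Ideal.eq_top_iff_one]
    have h1 : (1 : R ⧸ I) ∈ Ideal.map (Ideal.Quotient.mk I) (Ideal.ofList l) := by
      rw [← htop]; trivial
    rw [show (1 : R ⧸ I) = Ideal.Quotient.mk I 1 from rfl,
      Ideal.mem_quotient_iff_mem_sup, sup_comm] at h1
    exact h1

lemma lemmaM {K : Type*} [Field K] {n : ℕ} (D : Set (Fin n →₀ ℕ))
    (Fk : Finset (Fin n)) (v0 : Fin n) (hv0 : v0 ∈ Fk)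
    (hclique : ∀ a ∈ Fk, ∀ b ∈ Fk, a ≠ b →
      (Finsupp.single a 1 + Finsupp.single b 1 : Fin n →₀ ℕ) ∈ D)
    (hsq : ∀ d ∈ D, ∀ w ∈ Fk, d w ≤ 1)
    (hfree : ∀ d ∈ D, 0 < d v0 → ∃ b ∈ Fk, b ≠ v0 ∧ 0 < d b)
    (f : MvPolynomial (Fin n) K)
    (hf : f * (∑ j ∈ Fk, X j) ∈ Ideal.span ((fun d => monomial d (1 : K)) '' D)) :
    f ∈ Ideal.span ((fun d => monomial d (1 : K)) '' D) := by
  classical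
  rw [mem_ideal_span_monomial_image] at hf ⊢
  intro e he
  by_contra hbad
  push_neg at hbad
  -- choose the distinguished vertex w
  by_cases hT : ∃ a ∈ Fk, e a ≠ 0
  case pos =>
    obtain ⟨w, hwF, hwe⟩ := hT
    -- uniqueness of support vertex in Fk
    have huniq : ∀ j ∈ Fk, e j ≠ 0 → j = w := by
      intro j hjF hje
      by_contra hjw
      have hd : (Finsupp.single j 1 + Finsupp.single w 1 : Fin n →₀ ℕ) ∈ D :=
        hclique j hjF w hwF hjw
      refine hbad _ hd ?_
      intro u
      rcases eq_or_ne u j with rfl | huj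
      · simp [Finsupp.single_apply, Ne.symm hjw, Nat.one_le_iff_ne_zero, hje]
      · rcases eq_or_ne u w with rfl | huw
        · simp [Finsupp.single_apply, huj.symm, Nat.one_le_iff_ne_zero, hwe]
        · simp [Finsupp.single_apply, huj.symm, huw.symm]
    set E : Fin n →₀ ℕ := e + Finsupp.single w 1 with hE
    have hEe : E - Finsupp.single w 1 = e := add_tsub_cancel_right e _
    have hcoeff : coeff E (f * (∑ j ∈ Fk, X j)) = coeff e f := by
      rw [Finset.mul_sum, coeff_sum]
      rw [Finset.sum_eq_single w]
      · rw [coeff_mul_X', if_pos, hEe]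
        rw [Finsupp.mem_support_iff, hE]
        simp
      · intro j hjF hjw
        rw [coeff_mul_X', if_neg]
        rw [Finsupp.mem_support_iff, hE]
        intro hj
        have hj2 : e j ≠ 0 := by
          intro h0
          apply hj
          simp [Finsupp.single_apply, h0, Ne.symm hjw]
        exact hjw (huniq j hjF hj2)
      · intro hw; exact absurd hwF hw
    have hEne : coeff E (f * (∑ j ∈ Fk, X j)) ≠ 0 := by
      rw [hcoeff]; exact mem_support_iff.mp he
    obtain ⟨d, hdD, hdE⟩ := hf E (mem_support_iff.mpr hEne)
    refine hbad d hdD ?_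
    intro u
    rcases eq_or_ne u w with rfl | huw
    · have h1 := hsq d hdD u hwF
      have h2 : 1 ≤ e u := Nat.one_le_iff_ne_zero.mpr hwe
      exact h1.trans h2
    · have := hdE u
      simpa [hE, Finsupp.single_apply, huw.symm] using this
  case neg =>
    push_neg at hT
    set E : Fin n →₀ ℕ := e + Finsupp.single v0 1 with hE
    have hEe : E - Finsupp.single v0 1 = e := add_tsub_cancel_right e _
    have hcoeff : coeff E (f * (∑ j ∈ Fk, X j)) = coeff e f := by
      rw [Finset.mul_sum, coeff_sum]
      rw [Finset.sum_eq_single v0]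
      · rw [coeff_mul_X', if_pos, hEe]
        rw [Finsupp.mem_support_iff, hE]
        simp
      · intro j hjF hjv
        rw [coeff_mul_X', if_neg]
        rw [Finsupp.mem_support_iff, hE]
        have : e j = 0 := hT j hjF
        simp [Finsupp.single_apply, this, hjv, Ne.symm hjv]
      · intro hv; exact absurd hv0 hv
    have hEne : coeff E (f * (∑ j ∈ Fk, X j)) ≠ 0 := by
      rw [hcoeff]; exact mem_support_iff.mp he
    obtain ⟨d, hdD, hdE⟩ := hf E (mem_support_iff.mpr hEne)
    refine hbad d hdD ?_
    intro u
    rcases eq_or_ne u v0 with rfl | huv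
    · -- show d v0 = 0
      by_contra hpos
      push_neg at hpos
      have hdv : 0 < d u := by omega
      obtain ⟨b, hbF, hbv, hdb⟩ := hfree d hdD hdv
      have := hdE b
      rw [hE] at this
      have hb0 : e b = 0 := hT b hbF
      simp [Finsupp.single_apply, Ne.symm hbv, hb0] at this
      omega
    · have := hdE u
      simpa [hE, Finsupp.single_apply, huv.symm] using this

lemma aux_exists_facet {n : ℕ} (G : SimpleGraph (Fin n)) (C : Finset (Fin n))
    (hC : G.IsClique (C : Set (Fin n))) : ∃ Fc, G.IsFacet Fc ∧ C ⊆ Fc := by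
  classical
  set 𝒮 : Finset (Finset (Fin n)) :=
    Finset.univ.filter (fun C' => G.IsClique (C' : Set (Fin n)) ∧ C ⊆ C') with h𝒮
  have hCmem : C ∈ 𝒮 := by simp [h𝒮, hC]
  obtain ⟨M, hM𝒮, hMmax⟩ := Finset.exists_max_image 𝒮 Finset.card ⟨C, hCmem⟩
  rw [h𝒮, Finset.mem_filter] at hM𝒮
  refine ⟨M, ⟨hM𝒮.2.1, ?_⟩, hM𝒮.2.2⟩
  intro F' hF' hMF'
  have hF'𝒮 : F' ∈ 𝒮 := by
    rw [h𝒮, Finset.mem_filter]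
    exact ⟨Finset.mem_univ _, hF', hM𝒮.2.2.trans hMF'⟩
  exact (Finset.eq_of_subset_of_card_le hMF' (hMmax F' hF'𝒮)).symm

lemma aux_free_adj {n : ℕ} (G : SimpleGraph (Fin n)) {Fk : Finset (Fin n)} {v0 w : Fin n}
    (hfree : G.IsFreeVertex Fk v0) (h : G.Adj v0 w) : w ∈ Fk := by
  classical
  have hclique : G.IsClique (({v0, w} : Finset (Fin n)) : Set (Fin n)) := by
    rw [Finset.coe_insert, Finset.coe_singleton, SimpleGraph.isClique_pair]
    exact fun _ => h
  obtain ⟨Fc, hFc, hsub⟩ := aux_exists_facet G _ hclique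
  have := hfree.2 Fc hFc (hsub (by simp))
  subst this
  exact hsub (by simp)

/-- If `G` is a chordal graph on `[n]` such that `[n]` is the disjoint
union of the facets `F_1,…,F_m` of `Δ(G)` admitting a free vertex, then the elements
`y_i = ∑_{j ∈ F_i} x_j`, `i = 1,…,m`, form a regular sequence on `K[x_1,…,x_n]/I(G)`. -/
theorem sums_form_regular_sequence (K : Type*) [Field K] {n : ℕ} (G : SimpleGraph (Fin n))
    (hchordal : G.IsChordal) (hiso : ∀ v : Fin n, ∃ w, G.Adj v w)
    {m : ℕ} (F : Fin m → Finset (Fin n))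
    (hFfree : ∀ i, G.IsFreeFacet (F i)) (hFinj : Function.Injective F)
    (hFall : ∀ F' : Finset (Fin n), G.IsFreeFacet F' → ∃ i, F' = F i)
    (hdisj : ∀ i j, i ≠ j → Disjoint (F i) (F j))
    (hcover : ∀ v : Fin n, ∃ i, v ∈ F i) :
    RingTheory.Sequence.IsRegular (MvPolynomial (Fin n) K ⧸ edgeIdeal K G)
      (List.ofFn fun i : Fin m =>
        Ideal.Quotient.mk (edgeIdeal K G) (∑ j ∈ F i, X j)) := by
  classical
  -- chosen free vertices
  have hfv : ∀ i, ∃ v0, G.IsFreeVertex (F i) v0 := fun i => (hFfree i).2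
  choose v hv using hfv
  have hvmem : ∀ i, v i ∈ F i := fun i => (hv i).1
  have hFiFj : ∀ {i j : Fin m} {x : Fin n}, x ∈ F i → x ∈ F j → i = j := by
    intro i j x hxi hxj
    by_contra hij
    exact Finset.disjoint_left.mp (hdisj i j hij) hxi hxj
  have hvinj : Function.Injective v := fun i j h => hFiFj (hvmem i) (h ▸ hvmem j)
  have hadj_mem : ∀ (i : Fin m) (a : Fin n), G.Adj (v i) a → a ∈ F i :=
    fun i a h => aux_free_adj G (hv i) h
  have hcliqueF : ∀ i, G.IsClique ((F i : Set (Fin n))) := fun i => (hFfree i).1.1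
  have hadjF : ∀ (i : Fin m) {a b : Fin n}, a ∈ F i → b ∈ F i → a ≠ b → G.Adj a b :=
    fun i a b ha hb hab => (hcliqueF i) (Finset.mem_coe.mpr ha) (Finset.mem_coe.mpr hb) hab
  set yy : Fin m → MvPolynomial (Fin n) K := fun i => ∑ j ∈ F i, X j with hyy
  have hgoal : (List.ofFn fun i : Fin m =>
        Ideal.Quotient.mk (edgeIdeal K G) (∑ j ∈ F i, X j))
      = (List.ofFn yy).map (Ideal.Quotient.mk (edgeIdeal K G)) := by
    rw [List.map_ofFn]; rfl
  rw [hgoal]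
  apply gen_regular
  · -- the regularity condition
    intro k hk f hf
    rw [List.length_ofFn] at hk
    have hkm : k < m := hk
    set k0 : Fin m := ⟨k, hkm⟩ with hk0def
    have hgetel : (List.ofFn yy)[k]'(by simpa using hk) = yy k0 := by
      simp [hk0def]
    set Yk : Ideal (MvPolynomial (Fin n) K) :=
      Ideal.span (yy '' {i : Fin m | (i : ℕ) < k}) with hYkdef
    have htake : Ideal.ofList ((List.ofFn yy).take k) = Yk := by
      rw [hYkdef, Ideal.ofList]
      congr 1
      ext r
      simp only [Set.mem_setOf_eq, Set.mem_image]
      constructor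
      · intro hr
        obtain ⟨i, hi, hgi⟩ := List.mem_take_iff_getElem.mp hr
        have him : i < m := by simp at hi; omega
        have hik : i < k := by simp at hi; omega
        refine ⟨⟨i, him⟩, hik, ?_⟩
        rw [← hgi]
        simp
      · rintro ⟨i, hik, rfl⟩
        apply List.mem_take_iff_getElem.mpr
        refine ⟨(i : ℕ), by simp; omega, ?_⟩
        simp
    rw [hgetel] at hf
    rw [htake] at hf ⊢
    -- the set of "eliminated" free vertices
    set Vp : Fin n → Prop := fun u => ∃ i : Fin m, (i : ℕ) < k ∧ u = v i with hVpdef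
    set Dk : Set (Fin n →₀ ℕ) :=
      {d | ∃ a b : Fin n, G.Adj a b ∧ ¬ Vp a ∧ ¬ Vp b ∧
        d = Finsupp.single a 1 + Finsupp.single b 1} ∪
      {d | ∃ (w : Fin n) (i : Fin m), (i : ℕ) < k ∧ w ∈ F i ∧ w ≠ v i ∧
        d = Finsupp.single w 2} with hDkdef
    set Jk : Ideal (MvPolynomial (Fin n) K) :=
      Ideal.span ((fun d => monomial d (1 : K)) '' Dk) with hJkdef
    have hXX : ∀ a b : Fin n, (X a * X b : MvPolynomial (Fin n) K)
        = monomial (Finsupp.single a 1 + Finsupp.single b 1) 1 := by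
      intro a b
      rw [show (X a : MvPolynomial (Fin n) K) = monomial (Finsupp.single a 1) 1 from rfl,
        show (X b : MvPolynomial (Fin n) K) = monomial (Finsupp.single b 1) 1 from rfl,
        monomial_mul, one_mul]
    have hedge_mem : ∀ a b : Fin n, G.Adj a b → ¬ Vp a → ¬ Vp b →
        (X a * X b : MvPolynomial (Fin n) K) ∈ Jk := by
      intro a b hab hva hvb
      rw [hXX]
      exact Ideal.subset_span ⟨_, Or.inl ⟨a, b, hab, hva, hvb, rfl⟩, rfl⟩
    have hsq_mem : ∀ (w : Fin n) (i : Fin m), (i : ℕ) < k → w ∈ F i → w ≠ v i →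
        (X w ^ 2 : MvPolynomial (Fin n) K) ∈ Jk := by
      intro w i hik hwF hwv
      rw [X_pow_eq_monomial]
      exact Ideal.subset_span ⟨_, Or.inr ⟨w, i, hik, hwF, hwv, rfl⟩, rfl⟩
    have hVp_notF : ∀ (i : Fin m) (j : Fin n), j ∈ F i → j ≠ v i → ¬ Vp j := by
      rintro i j hjF hjv ⟨i', hi', rfl⟩
      have hii : i = i' := hFiFj hjF (hvmem i')
      exact hjv (by rw [hii])
    have hnotVp_Fk : ∀ j ∈ F k0, ¬ Vp j := by
      rintro j hjF ⟨i', hi', rfl⟩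
      have hii : k0 = i' := hFiFj hjF (hvmem i')
      rw [← hii] at hi'
      exact lt_irrefl k hi'
    set g : Fin n → MvPolynomial (Fin n) K := fun u =>
      if h : Vp u then -(∑ j ∈ (F (h.choose)).erase (v (h.choose)), X j) else X u with hgdef
    set ψ : MvPolynomial (Fin n) K →ₐ[K] MvPolynomial (Fin n) K := aeval g with hψdef
    have hgv : ∀ i : Fin m, (i : ℕ) < k →
        g (v i) = -(∑ j ∈ (F i).erase (v i), X j) := by
      intro i hik
      have hvp : Vp (v i) := ⟨i, hik, rfl⟩
      simp only [hgdef]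
      rw [dif_pos hvp]
      have hch : hvp.choose = i := (hvinj hvp.choose_spec.2).symm
      rw [hch]
    have hgX : ∀ u : Fin n, ¬ Vp u → g u = X u := by
      intro u hu
      simp only [hgdef]
      rw [dif_neg hu]
    have hψX : ∀ u : Fin n, ψ (X u) = g u := fun u => aeval_X g u
    have hψyy : ∀ i : Fin m, (i : ℕ) < k → ψ (yy i) = 0 := by
      intro i hik
      have : ψ (yy i) = ∑ j ∈ F i, g j := by
        simp only [hyy, map_sum, hψX]
      rw [this, ← Finset.add_sum_erase _ g (hvmem i), hgv i hik,
        Finset.sum_congr rfl (fun j hj => hgX j (hVp_notF i j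
          (Finset.mem_of_mem_erase hj) (Finset.ne_of_mem_erase hj)))]
      exact neg_add_cancel _
    have hψyyk : ψ (yy k0) = yy k0 := by
      have : ψ (yy k0) = ∑ j ∈ F k0, g j := by
        simp only [hyy, map_sum, hψX]
      rw [this]
      exact Finset.sum_congr rfl fun j hj => hgX j (hnotVp_Fk j hj)
    have hψsub : ∀ p : MvPolynomial (Fin n) K, p - ψ p ∈ Yk := by
      intro p
      induction p using MvPolynomial.induction_on with
      | C a => rw [show ψ (C a) = C a from aeval_C g a, sub_self]; exact zero_mem _
      | add p q hp hq =>
        have heq : (p + q) - ψ (p + q) = (p - ψ p) + (q - ψ q) := by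
          rw [map_add]; ring
        rw [heq]; exact add_mem hp hq
      | mul_X p u hp =>
        have hXu : X u - g u ∈ Yk := by
          by_cases hu : Vp u
          · obtain ⟨i, hik, rfl⟩ := hu
            rw [hgv i hik, sub_neg_eq_add, Finset.add_sum_erase _ _ (hvmem i)]
            exact Ideal.subset_span ⟨i, hik, rfl⟩
          · rw [hgX u hu, sub_self]; exact zero_mem _
        have heq : p * X u - ψ (p * X u) = (p - ψ p) * X u + ψ p * (X u - g u) := by
          rw [map_mul, hψX]; ring
        rw [heq]
        exact add_mem (Ideal.mul_mem_right _ _ hp) (Ideal.mul_mem_left _ _ hXu)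
    have hψY : ∀ q ∈ Yk, ψ q = 0 := by
      intro q hq
      rw [hYkdef] at hq
      refine Submodule.span_induction ?_ ?_ ?_ ?_ hq
      · rintro x ⟨i, hik, rfl⟩; exact hψyy i hik
      · exact map_zero ψ
      · intro x y _ _ hx hy; rw [map_add, hx, hy, add_zero]
      · intro r x _ hx; rw [smul_eq_mul, map_mul, hx, mul_zero]
    have hcase : ∀ a b : Fin n, G.Adj a b → Vp a → ¬ Vp b → g a * g b ∈ Jk := by
      intro a b hab hva hvb
      obtain ⟨i, hik, rfl⟩ := hva
      rw [hgv i hik, hgX b hvb, neg_mul, Finset.sum_mul]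
      refine neg_mem (Ideal.sum_mem _ ?_)
      intro j hj
      have hjF : j ∈ F i := Finset.mem_of_mem_erase hj
      have hjv : j ≠ v i := Finset.ne_of_mem_erase hj
      have hbF : b ∈ F i := hadj_mem i b hab
      rcases eq_or_ne j b with rfl | hjb
      · rw [← sq]
        exact hsq_mem j i hik hjF hjv
      · exact hedge_mem j b (hadjF i hjF hbF hjb) (hVp_notF i j hjF hjv) hvb
    have hψI : ∀ p ∈ edgeIdeal K G, ψ p ∈ Jk := by
      intro p hp
      rw [edgeIdeal] at hp
      refine Submodule.span_induction ?_ ?_ ?_ ?_ hp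
      · rintro x ⟨a, b, hab, rfl⟩
        rw [map_mul, hψX, hψX]
        by_cases hva : Vp a
        · by_cases hvb : Vp b
          · exfalso
            obtain ⟨i, hik, rfl⟩ := hva
            obtain ⟨i', hik', rfl⟩ := hvb
            have hbFi : v i' ∈ F i := hadj_mem i _ hab
            have hii : i = i' := hFiFj hbFi (hvmem i')
            exact hab.ne (by rw [hii])
          · exact hcase a b hab hva hvb
        · by_cases hvb : Vp b
          · rw [mul_comm]; exact hcase b a hab.symm hvb hva
          · rw [hgX a hva, hgX b hvb]; exact hedge_mem a b hab hva hvb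
      · rw [map_zero]; exact zero_mem _
      · intro x y _ _ hx hy; rw [map_add]; exact add_mem hx hy
      · intro r x _ hx; rw [smul_eq_mul, map_mul]; exact Ideal.mul_mem_left _ _ hx
    have hJKle : Jk ≤ edgeIdeal K G ⊔ Yk := by
      rw [hJkdef, Ideal.span_le]
      rintro p ⟨d, hd, rfl⟩
      apply SetLike.mem_coe.mpr
      rcases hd with ⟨a, b, hab, hva, hvb, rfl⟩ | ⟨w, i, hik, hwF, hwv, rfl⟩
      · have hrw : ((fun d => monomial d (1 : K)) (Finsupp.single a 1 + Finsupp.single b 1))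
            = X a * X b := (hXX a b).symm
        rw [hrw]
        exact Ideal.mem_sup_left (Ideal.subset_span ⟨a, b, hab, rfl⟩)
      · have h1 : (X w : MvPolynomial (Fin n) K) * yy i
            = X w ^ 2 + ∑ j ∈ (F i).erase w, X w * X j := by
          simp only [hyy]
          rw [Finset.mul_sum, ← Finset.add_sum_erase _ _ hwF, sq]
        have h2 : ((fun d => monomial d (1 : K)) (Finsupp.single w 2))
            = X w * yy i - ∑ j ∈ (F i).erase w, X w * X j := by
          show (monomial (Finsupp.single w 2) (1 : K)) = _
          rw [← X_pow_eq_monomial, h1]; ring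
        rw [h2]
        refine sub_mem (Ideal.mem_sup_right ?_) (Ideal.mem_sup_left (Ideal.sum_mem _ ?_))
        · exact Ideal.mul_mem_left _ _ (Ideal.subset_span ⟨i, hik, rfl⟩)
        · intro j hj
          exact Ideal.subset_span ⟨w, j, hadjF i hwF (Finset.mem_of_mem_erase hj)
            (Ne.symm (Finset.ne_of_mem_erase hj)), rfl⟩
    have hcliqueD : ∀ a ∈ F k0, ∀ b ∈ F k0, a ≠ b →
        (Finsupp.single a 1 + Finsupp.single b 1 : Fin n →₀ ℕ) ∈ Dk := by
      intro a ha b hb hab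
      exact Or.inl ⟨a, b, hadjF k0 ha hb hab, hnotVp_Fk a ha, hnotVp_Fk b hb, rfl⟩
    have hsqD : ∀ d ∈ Dk, ∀ w ∈ F k0, d w ≤ 1 := by
      rintro d (⟨a, b, hab, -, -, rfl⟩ | ⟨w', i, hik, hw'F, -, rfl⟩) w hw
      · have hne := hab.ne
        simp only [Finsupp.add_apply, Finsupp.single_apply]
        split_ifs with h1 h2
        · exact absurd (h1.trans h2.symm) hne
        · omega
        · omega
        · omega
      · have hik0 : i ≠ k0 := by
          intro h; rw [h] at hik; exact lt_irrefl k hik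
        have hww : w' ≠ w := fun h => hik0 (hFiFj hw'F (h ▸ hw))
        simp [Finsupp.single_apply, hww]
    have hfreeD : ∀ d ∈ Dk, 0 < d (v k0) → ∃ b ∈ F k0, b ≠ v k0 ∧ 0 < d b := by
      rintro d (⟨a, b, hab, hva, hvb, rfl⟩ | ⟨w', i, hik, hw'F, hw'v, rfl⟩) hpos
      · rcases eq_or_ne a (v k0) with rfl | hav
        · refine ⟨b, hadj_mem k0 b hab, hab.ne', ?_⟩
          simp [Finsupp.add_apply, Finsupp.single_apply, hab.ne]
        · rcases eq_or_ne b (v k0) with rfl | hbv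
          · refine ⟨a, hadj_mem k0 a hab.symm, hab.ne, ?_⟩
            simp [Finsupp.add_apply, Finsupp.single_apply, hab.ne']
          · exfalso
            simp [Finsupp.add_apply, Finsupp.single_apply, hav, hbv] at hpos
      · exfalso
        have hwv0 : w' = v k0 := by
          by_contra h
          simp [Finsupp.single_apply, h] at hpos
        have : i = k0 := hFiFj (hwv0 ▸ hw'F) (hvmem k0)
        rw [this] at hik
        exact lt_irrefl k hik
    -- main chain
    obtain ⟨p, hp, q, hq, hpq⟩ := Submodule.mem_sup.mp hf
    have h1 : ψ (f * yy k0) = ψ p := by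
      rw [← hpq, map_add, hψY q hq, add_zero]
    have h2 : ψ f * yy k0 ∈ Jk := by
      have : ψ f * yy k0 = ψ (f * yy k0) := by rw [map_mul, hψyyk]
      rw [this, h1]
      exact hψI p hp
    have h3 : ψ f ∈ Jk := by
      rw [hJkdef]
      rw [hJkdef] at h2
      exact lemmaM Dk (F k0) (v k0) (hvmem k0) hcliqueD hsqD hfreeD (ψ f) h2
    have h4 : ψ f ∈ edgeIdeal K G ⊔ Yk := hJKle h3
    have h5 : f - ψ f ∈ Yk := hψsub f
    have heq : f = ψ f + (f - ψ f) := by ring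
    rw [heq]
    exact add_mem h4 (Ideal.mem_sup_right h5)
  · -- quotient nonzero
    intro htop
    set ε : MvPolynomial (Fin n) K →ₐ[K] K := aeval (fun _ => (0 : K)) with hε
    have hle : edgeIdeal K G ⊔ Ideal.ofList (List.ofFn yy) ≤ RingHom.ker ε.toRingHom := by
      apply sup_le
      · rw [edgeIdeal, Ideal.span_le]
        rintro p ⟨i, j, hadj, rfl⟩
        simp [RingHom.mem_ker, hε]
      · rw [Ideal.ofList, Ideal.span_le]
        intro r hr
        obtain ⟨i, rfl⟩ := List.mem_ofFn.mp hr
        simp [RingHom.mem_ker, hε, hyy]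
    rw [htop] at hle
    have h1 : (1 : MvPolynomial (Fin n) K) ∈ RingHom.ker ε.toRingHom := hle trivial
    rw [RingHom.mem_ker, map_one] at h1
    exact one_ne_zero h1
end
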